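/- Let X̃, Ỹ ∈ ℝ^{N×k} be matrices such that range(X̃) and range(Ỹ) are ε-apart for some ε ∈ [0,1], and let K = X̃† Ỹ. Then for every w ∈ ℝ^k, ‖(Ỹ − X̃ K) w‖₂ ≤ ε ‖Ỹ w‖₂. -/

import Mathlib

open Matrix

/-- If `range(X̃)` and `range(Ỹ)` (viewed as subspaces of Euclidean space `ℝ^N`) are
`ε`-apart for some `ε ∈ [0,1]`, and `K = X̃† Ỹ` where `X̃†` is the Moore–Penrose
pseudoinverse of `X̃` (characterized by the four Penrose conditions), then
`‖(Ỹ − X̃ K) w‖₂ ≤ ε ‖Ỹ w‖₂` for every `w ∈ ℝ^k`. -/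
theorem stmt_14 (N k : ℕ) (Xt Yt : Matrix (Fin N) (Fin k) ℝ)
    (Xdag : Matrix (Fin k) (Fin N) ℝ)
    (hp1 : Xt * Xdag * Xt = Xt) (hp2 : Xdag * Xt * Xdag = Xdag)
    (hp3 : (Xt * Xdag)ᵀ = Xt * Xdag) (hp4 : (Xdag * Xt)ᵀ = Xdag * Xt)
    (ε : ℝ) (hε0 : 0 ≤ ε) (hε1 : ε ≤ 1)
    (S₁ S₂ : Submodule ℝ (EuclideanSpace ℝ (Fin N)))
    (hS₁ : S₁ = (LinearMap.range Xt.mulVecLin).map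
      (WithLp.linearEquiv 2 ℝ (Fin N → ℝ)).symm.toLinearMap)
    (hS₂ : S₂ = (LinearMap.range Yt.mulVecLin).map
      (WithLp.linearEquiv 2 ℝ (Fin N → ℝ)).symm.toLinearMap)
    (hapart : ∀ v ∈ (S₁ : Set (EuclideanSpace ℝ (Fin N))) ∪
        (S₂ : Set (EuclideanSpace ℝ (Fin N))),
      ‖(Submodule.orthogonalProjectionOnto S₁ v : EuclideanSpace ℝ (Fin N)) -
        (Submodule.orthogonalProjectionOnto S₂ v : EuclideanSpace ℝ (Fin N))‖ ≤ ε * ‖v‖) :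
    ∀ w : Fin k → ℝ,
      ‖(WithLp.linearEquiv 2 ℝ (Fin N → ℝ)).symm ((Yt - Xt * (Xdag * Yt)).mulVec w)‖ ≤
        ε * ‖(WithLp.linearEquiv 2 ℝ (Fin N → ℝ)).symm (Yt.mulVec w)‖ := by
  intro w
  set e := (WithLp.linearEquiv 2 ℝ (Fin N → ℝ)).symm with he
  set v : EuclideanSpace ℝ (Fin N) := e (Yt.mulVec w) with hv
  set u : EuclideanSpace ℝ (Fin N) := e ((Xt * Xdag).mulVec (Yt.mulVec w)) with hu
  have hvS₂ : v ∈ S₂ := by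
    rw [hS₂]
    exact Submodule.mem_map_of_mem ⟨w, rfl⟩
  have huS₁ : u ∈ S₁ := by
    rw [hS₁]
    exact Submodule.mem_map_of_mem
      ⟨Xdag.mulVec (Yt.mulVec w), by simp [Matrix.mulVecLin_apply, Matrix.mulVec_mulVec, Matrix.mul_assoc]⟩
  have hkey : Xtᵀ * (Xt * Xdag) = Xtᵀ := by
    calc Xtᵀ * (Xt * Xdag) = Xtᵀ * (Xt * Xdag)ᵀ := by rw [hp3]
      _ = ((Xt * Xdag) * Xt)ᵀ := by rw [← Matrix.transpose_mul]
      _ = Xtᵀ := by rw [hp1]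
  have hzero : Xtᵀ.mulVec (Yt.mulVec w - (Xt * Xdag).mulVec (Yt.mulVec w)) = 0 := by
    have h2 : Xtᵀ.mulVec ((Xt * Xdag).mulVec (Yt.mulVec w)) = Xtᵀ.mulVec (Yt.mulVec w) := by
      rw [Matrix.mulVec_mulVec, hkey]
    rw [Matrix.mulVec_sub, h2, sub_self]
  have hP₁ : (Submodule.orthogonalProjectionOnto S₁ v : EuclideanSpace ℝ (Fin N)) = u := by
    rw [← Submodule.starProjection_apply]
    apply Submodule.eq_starProjection_of_mem_of_inner_eq_zero huS₁
    intro z hz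
    rw [hS₁] at hz
    obtain ⟨y, ⟨c, rfl⟩, rfl⟩ := hz
    show (inner ℝ (v - u) (e (Xt.mulVecLin c)) : ℝ) = 0
    have : (v - u : EuclideanSpace ℝ (Fin N))
        = e (Yt.mulVec w - (Xt * Xdag).mulVec (Yt.mulVec w)) := by
      rw [hv, hu, map_sub]
    rw [this]
    rw [PiLp.inner_apply]
    simp only [RCLike.inner_apply, starRingEnd_apply, star_trivial]
    have : ∀ i, e (Yt.mulVec w - (Xt * Xdag).mulVec (Yt.mulVec w)) i
        = (Yt.mulVec w - (Xt * Xdag).mulVec (Yt.mulVec w)) i := fun _ => rfl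
    rw [Finset.sum_congr rfl (fun i _ => mul_comm _ _)]
    calc (∑ i, e (Yt.mulVec w - (Xt * Xdag).mulVec (Yt.mulVec w)) i * e (Xt.mulVecLin c) i)
        = (Yt.mulVec w - (Xt * Xdag).mulVec (Yt.mulVec w)) ⬝ᵥ Xt.mulVec c := rfl
      _ = Xt.vecMul (Yt.mulVec w - (Xt * Xdag).mulVec (Yt.mulVec w)) ⬝ᵥ c := by
          rw [Matrix.dotProduct_mulVec]
      _ = Xtᵀ.mulVec (Yt.mulVec w - (Xt * Xdag).mulVec (Yt.mulVec w)) ⬝ᵥ c := by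
          rw [Matrix.mulVec_transpose]
      _ = 0 := by rw [hzero, zero_dotProduct]
  have hP₂ : (Submodule.orthogonalProjectionOnto S₂ v : EuclideanSpace ℝ (Fin N)) = v := by
    rw [← Submodule.starProjection_apply]
    exact Submodule.starProjection_eq_self_iff.mpr hvS₂
  have hlhs : e ((Yt - Xt * (Xdag * Yt)).mulVec w) = v - u := by
    rw [hv, hu, ← map_sub]
    congr 1
    rw [Matrix.sub_mulVec, ← Matrix.mul_assoc, Matrix.mulVec_mulVec]
  have := hapart v (Or.inr hvS₂)
  rw [hP₁, hP₂] at this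
  rw [hlhs, ← norm_neg, neg_sub]
  exact this
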